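/- The sl₂(ℂ)-module V(a)^{[μ]} is simple if and only if μ + a ∉ ℤ and μ - a ∉ ℤ. -/

import Mathlib

/-- The sl₂(ℂ)-module `V(a)^{[μ]}` (with basis `{x^{μ+n} : n ∈ ℤ}`, modeled as
`ℤ →₀ ℂ`, the action being `e(x^s) = (a+s)x^{s+1}`, `f(x^s) = (a-s)x^{s-1}`,
`h(x^s) = 2s·x^s` for `s = μ + n`) is simple — i.e. it is nonzero and has no
submodule invariant under `e, f, h` other than `⊥` and `⊤` — if and only if
`μ + a ∉ ℤ` and `μ - a ∉ ℤ`. -/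
theorem stmt2 (a μ : ℂ)
    (e f h : (ℤ →₀ ℂ) →ₗ[ℂ] (ℤ →₀ ℂ))
    (he : ∀ n : ℤ, e (Finsupp.single n 1) = (a + μ + n) • Finsupp.single (n + 1) 1)
    (hf : ∀ n : ℤ, f (Finsupp.single n 1) = (a - μ - n) • Finsupp.single (n - 1) 1)
    (hh : ∀ n : ℤ, h (Finsupp.single n 1) = (2 * (μ + n)) • Finsupp.single n 1) :
    ((∃ v : ℤ →₀ ℂ, v ≠ 0) ∧
      ∀ p : Submodule ℂ (ℤ →₀ ℂ),
        Submodule.map e p ≤ p → Submodule.map f p ≤ p → Submodule.map h p ≤ p →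
        p = ⊥ ∨ p = ⊤)
    ↔ ((¬ ∃ n : ℤ, μ + a = (n : ℂ)) ∧ (¬ ∃ n : ℤ, μ - a = (n : ℂ))) := by
  constructor
  · rintro ⟨-, hsub⟩
    constructor
    · rintro ⟨k, hk⟩
      set p : Submodule ℂ (ℤ →₀ ℂ) := Finsupp.supported ℂ ℂ (Set.Iic (-k)) with hpdef
      have hps : p = Submodule.span ℂ ((fun i => Finsupp.single i (1:ℂ)) '' Set.Iic (-k)) :=
        Finsupp.supported_eq_span_single ℂ (Set.Iic (-k))
      have hsing : ∀ m : ℤ, m ≤ -k → Finsupp.single m (1:ℂ) ∈ p := by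
        intro m hm
        rw [hps]
        exact Submodule.subset_span ⟨m, hm, rfl⟩
      have hmape : Submodule.map e p ≤ p := by
        conv_lhs => rw [hps]
        rw [Submodule.map_span, Submodule.span_le]
        rintro _ ⟨_, ⟨m, hm, rfl⟩, rfl⟩
        rw [he m]
        rcases lt_or_eq_of_le (Set.mem_Iic.mp hm) with hlt | heq
        · exact Submodule.smul_mem _ _ (hsing (m+1) (by omega))
        · have hc : (a + μ + (m:ℂ)) = 0 := by
            rw [heq]; push_cast; linear_combination hk
          rw [hc, zero_smul]
          exact p.zero_mem
      have hmapf : Submodule.map f p ≤ p := by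
        conv_lhs => rw [hps]
        rw [Submodule.map_span, Submodule.span_le]
        rintro _ ⟨_, ⟨m, hm, rfl⟩, rfl⟩
        rw [hf m]
        exact Submodule.smul_mem _ _ (hsing (m-1) (by simp at hm; omega))
      have hmaph : Submodule.map h p ≤ p := by
        conv_lhs => rw [hps]
        rw [Submodule.map_span, Submodule.span_le]
        rintro _ ⟨_, ⟨m, hm, rfl⟩, rfl⟩
        rw [hh m]
        exact Submodule.smul_mem _ _ (hsing m hm)
      rcases hsub p hmape hmapf hmaph with hb | ht
      · have : Finsupp.single (-k) (1:ℂ) ∈ p := hsing (-k) le_rfl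
        rw [hb, Submodule.mem_bot] at this
        exact one_ne_zero (Finsupp.single_eq_zero.mp this)
      · have : Finsupp.single (-k+1) (1:ℂ) ∈ p := by rw [ht]; trivial
        rw [hpdef, Finsupp.mem_supported'] at this
        have h0 := this (-k+1) (by simp)
        rw [Finsupp.single_eq_same] at h0
        exact one_ne_zero h0
    · rintro ⟨k, hk⟩
      set p : Submodule ℂ (ℤ →₀ ℂ) := Finsupp.supported ℂ ℂ (Set.Ici (-k)) with hpdef
      have hps : p = Submodule.span ℂ ((fun i => Finsupp.single i (1:ℂ)) '' Set.Ici (-k)) :=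
        Finsupp.supported_eq_span_single ℂ (Set.Ici (-k))
      have hsing : ∀ m : ℤ, -k ≤ m → Finsupp.single m (1:ℂ) ∈ p := by
        intro m hm
        rw [hps]
        exact Submodule.subset_span ⟨m, hm, rfl⟩
      have hmape : Submodule.map e p ≤ p := by
        conv_lhs => rw [hps]
        rw [Submodule.map_span, Submodule.span_le]
        rintro _ ⟨_, ⟨m, hm, rfl⟩, rfl⟩
        rw [he m]
        exact Submodule.smul_mem _ _ (hsing (m+1) (by simp at hm; omega))
      have hmapf : Submodule.map f p ≤ p := by
        conv_lhs => rw [hps]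
        rw [Submodule.map_span, Submodule.span_le]
        rintro _ ⟨_, ⟨m, hm, rfl⟩, rfl⟩
        rw [hf m]
        rcases lt_or_eq_of_le (Set.mem_Ici.mp hm) with hlt | heq
        · exact Submodule.smul_mem _ _ (hsing (m-1) (by omega))
        · have hc : (a - μ - (m:ℂ)) = 0 := by
            rw [← heq]; push_cast; linear_combination -hk
          rw [hc, zero_smul]
          exact p.zero_mem
      have hmaph : Submodule.map h p ≤ p := by
        conv_lhs => rw [hps]
        rw [Submodule.map_span, Submodule.span_le]
        rintro _ ⟨_, ⟨m, hm, rfl⟩, rfl⟩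
        rw [hh m]
        exact Submodule.smul_mem _ _ (hsing m hm)
      rcases hsub p hmape hmapf hmaph with hb | ht
      · have : Finsupp.single (-k) (1:ℂ) ∈ p := hsing (-k) le_rfl
        rw [hb, Submodule.mem_bot] at this
        exact one_ne_zero (Finsupp.single_eq_zero.mp this)
      · have : Finsupp.single (-k-1) (1:ℂ) ∈ p := by rw [ht]; trivial
        rw [hpdef, Finsupp.mem_supported'] at this
        have h0 := this (-k-1) (by simp)
        rw [Finsupp.single_eq_same] at h0
        exact one_ne_zero h0
  · rintro ⟨h1, h2⟩
    have hcoe : ∀ m : ℤ, a + μ + (m:ℂ) ≠ 0 := by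
      intro m hm
      exact h1 ⟨-m, by push_cast; linear_combination hm⟩
    have hcof : ∀ m : ℤ, a - μ - (m:ℂ) ≠ 0 := by
      intro m hm
      exact h2 ⟨-m, by push_cast; linear_combination -hm⟩
    refine ⟨⟨Finsupp.single 0 1, fun hz => one_ne_zero (Finsupp.single_eq_zero.mp hz)⟩, ?_⟩
    intro p hpe hpf hph
    by_cases hbot : p = ⊥
    · exact Or.inl hbot
    right
    obtain ⟨v, hvp, hv0⟩ := (Submodule.ne_bot_iff p).mp hbot
    have hpt : ∀ (v : ℤ →₀ ℂ) (m : ℤ), (h v) m = 2*(μ+m) * v m := by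
      intro v m
      induction v using Finsupp.induction_linear with
      | zero => simp
      | add v1 v2 ih1 ih2 => rw [map_add]; simp [ih1, ih2]; ring
      | single n c =>
        rw [← Finsupp.smul_single_one n c, map_smul, hh n]
        simp only [Finsupp.smul_apply, smul_eq_mul, Finsupp.single_apply]
        by_cases hnm : n = m
        · subst hnm; simp; ring
        · simp [hnm]
    have step : ∀ N : ℕ, ∀ v : ℤ →₀ ℂ, v.support.card ≤ N → v ∈ p → v ≠ 0 →
        ∃ n : ℤ, Finsupp.single n (1:ℂ) ∈ p := by
      intro N
      induction N with
      | zero =>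
        intro v hc hvp hv0
        exact absurd (Finsupp.support_eq_empty.mp (Finset.card_eq_zero.mp (Nat.le_zero.mp hc))) hv0
      | succ N ih =>
        intro v hc hvp hv0
        obtain ⟨n₀, hn₀⟩ := Finsupp.support_nonempty_iff.mpr hv0
        set w : ℤ →₀ ℂ := h v - (2*(μ+n₀)) • v with hw
        have hwp : w ∈ p := Submodule.sub_mem p (hph (Submodule.mem_map_of_mem hvp))
          (Submodule.smul_mem p _ hvp)
        have hwm : ∀ m : ℤ, w m = 2*((m:ℂ) - n₀) * v m := by
          intro m
          rw [hw]
          simp only [Finsupp.sub_apply, Finsupp.smul_apply, smul_eq_mul, hpt]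
          ring
        by_cases hw0 : w = 0
        · refine ⟨n₀, ?_⟩
          have hvn₀ : v n₀ ≠ 0 := Finsupp.mem_support_iff.mp hn₀
          have hveq : Finsupp.single n₀ (1:ℂ) = (v n₀)⁻¹ • v := by
            ext m
            by_cases hm : m = n₀
            · subst hm
              simp [inv_mul_cancel₀ hvn₀]
            · have hz := hwm m
              rw [hw0] at hz
              simp only [Finsupp.coe_zero, Pi.zero_apply] at hz
              have hne : ((m:ℂ) - n₀) ≠ 0 := sub_ne_zero.mpr (by exact_mod_cast hm)
              have hvm : v m = 0 := by
                rcases mul_eq_zero.mp hz.symm with h' | h'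
                · exact absurd h' (by simp [hne])
                · exact h'
              simp [Finsupp.single_apply, hm, hvm, Ne.symm hm]
          rw [hveq]
          exact Submodule.smul_mem p _ hvp
        · have hsub' : w.support ⊆ v.support.erase n₀ := by
            intro m hm
            rw [Finsupp.mem_support_iff] at hm
            have hmn : m ≠ n₀ := by
              intro hcon
              apply hm
              rw [hcon, hwm]
              simp
            rw [Finset.mem_erase, Finsupp.mem_support_iff]
            refine ⟨hmn, ?_⟩
            intro hv
            apply hm
            rw [hwm, hv, mul_zero]
          have hcard : w.support.card ≤ N := by
            have h1' := Finset.card_le_card hsub'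
            have h2' := Finset.card_erase_of_mem hn₀
            omega
          exact ih w hcard hwp hw0
    obtain ⟨n, hn⟩ := step v.support.card v le_rfl hvp hv0
    have up : ∀ m : ℤ, Finsupp.single m (1:ℂ) ∈ p → Finsupp.single (m+1) (1:ℂ) ∈ p := by
      intro m hm
      have h1' : e (Finsupp.single m 1) ∈ p := hpe (Submodule.mem_map_of_mem hm)
      rw [he m] at h1'
      have h2' := Submodule.smul_mem p (a+μ+(m:ℂ))⁻¹ h1'
      rwa [smul_smul, inv_mul_cancel₀ (hcoe m), one_smul] at h2'
    have down : ∀ m : ℤ, Finsupp.single m (1:ℂ) ∈ p → Finsupp.single (m-1) (1:ℂ) ∈ p := by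
      intro m hm
      have h1' : f (Finsupp.single m 1) ∈ p := hpf (Submodule.mem_map_of_mem hm)
      rw [hf m] at h1'
      have h2' := Submodule.smul_mem p (a-μ-(m:ℂ))⁻¹ h1'
      rwa [smul_smul, inv_mul_cancel₀ (hcof m), one_smul] at h2'
    have all : ∀ m : ℤ, Finsupp.single (n + m) (1:ℂ) ∈ p := by
      intro m
      induction m using Int.induction_on with
      | zero => simpa using hn
      | succ i hi =>
        have := up _ hi
        rwa [show n + (i:ℤ) + 1 = n + ((i:ℤ)+1) by ring] at this
      | pred i hi =>
        have := down _ hi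
        rwa [show n + (-(i:ℤ)) - 1 = n + (-(i:ℤ)-1) by ring] at this
    have allm : ∀ m : ℤ, Finsupp.single m (1:ℂ) ∈ p := by
      intro m
      have := all (m - n)
      rwa [show n + (m - n) = m by ring] at this
    have key : ∀ u : ℤ →₀ ℂ, u ∈ p := by
      intro u
      induction u using Finsupp.induction_linear with
    | zero => exact p.zero_mem
    | add v1 v2 ih1 ih2 => exact p.add_mem ih1 ih2
    | single m c =>
      rw [← Finsupp.smul_single_one]
      exact p.smul_mem c (allm m)
    exact Submodule.eq_top_iff'.mpr key
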